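/- Let A be a discrete set in ℝ^p. Then the following are equivalent: (i) for every continuous function φ : ℝ^p → ℝ with compact support, the function x ↦ ∑_{a ∈ A} φ(x + a) is Bohr almost periodic on ℝ^p; (ii) for every ε > 0, the set of ε-almost periods of A, namely {τ ∈ ℝ^p : there exists a bijection σ : A → A with |a + τ − σ(a)| < ε for all a ∈ A}, is relatively dense in ℝ^p. -/

import Mathlib

open Pointwise

noncomputable section

/-- A set `S ⊆ ℝ^p` is relatively dense if there is `R` such that every ball of
radius `R` contains a point of `S`. -/
def RelativelyDense {p : ℕ} (S : Set (EuclideanSpace ℝ (Fin p))) : Prop :=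
  ∃ R : ℝ, ∀ x : EuclideanSpace ℝ (Fin p), ∃ s ∈ S, dist x s ≤ R

/-- A set `A ⊆ ℝ^p` is discrete: closed with finite intersection with every compact set. -/
def DiscreteSet {p : ℕ} (A : Set (EuclideanSpace ℝ (Fin p))) : Prop :=
  IsClosed A ∧ ∀ K : Set (EuclideanSpace ℝ (Fin p)), IsCompact K → (A ∩ K).Finite

/-- `τ` is an `ε`-almost period of `A`: there is a bijection `σ : A → A` with
`|a + τ - σ a| < ε` for all `a ∈ A`. -/
def IsAlmostPeriodOf {p : ℕ} (A : Set (EuclideanSpace ℝ (Fin p))) (ε : ℝ)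
    (τ : EuclideanSpace ℝ (Fin p)) : Prop :=
  ∃ σ : A ≃ A, ∀ a : A,
    ‖(a : EuclideanSpace ℝ (Fin p)) + τ - (σ a : EuclideanSpace ℝ (Fin p))‖ < ε

/-- `A` is an almost periodic set: for every `ε > 0` its set of `ε`-almost periods is
relatively dense. -/
def AlmostPeriodicSet {p : ℕ} (A : Set (EuclideanSpace ℝ (Fin p))) : Prop :=
  ∀ ε : ℝ, 0 < ε → RelativelyDense {τ | IsAlmostPeriodOf A ε τ}

/-- `L` is a full rank lattice: the set of integer linear combinations of `p` linearly
independent vectors of `ℝ^p`. -/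
def IsFullRankLattice {p : ℕ} (L : Set (EuclideanSpace ℝ (Fin p))) : Prop :=
  ∃ T : Fin p → EuclideanSpace ℝ (Fin p), LinearIndependent ℝ T ∧
    L = {x | ∃ n : Fin p → ℤ, x = ∑ i, (n i : ℝ) • T i}

/-- `f` is Bohr almost periodic: `f` is continuous and for every `ε > 0` the set of
`τ` with `|f (x + τ) - f x| < ε` for all `x` is relatively dense. -/
def BohrAlmostPeriodic {p : ℕ} (f : EuclideanSpace ℝ (Fin p) → ℝ) : Prop :=
  Continuous f ∧ ∀ ε : ℝ, 0 < ε →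
    RelativelyDense {τ | ∀ x : EuclideanSpace ℝ (Fin p), |f (x + τ) - f x| < ε}

section Aux

variable {p : ℕ}

local notation "E" => EuclideanSpace ℝ (Fin p)

theorem relDense_mono {S T : Set E} (hST : S ⊆ T) (h : RelativelyDense S) :
    RelativelyDense T := by
  obtain ⟨R, hR⟩ := h
  exact ⟨R, fun x => by obtain ⟨s, hs, hd⟩ := hR x; exact ⟨s, hST hs, hd⟩⟩

theorem finA {A : Set E} (hdisc : DiscreteSet A) (c : E) (r : ℝ) :
    (A ∩ Metric.closedBall c r).Finite :=
  hdisc.2 _ (isCompact_closedBall c r)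

/-- finsum over A equals a finite sum over any finset D ⊆ A catching the support. -/
theorem lem_sum_eq {A : Set E} (φ : E → ℝ) (x : E) (D : Finset E)
    (hD : ↑D ⊆ A) (h : ∀ b ∈ A, φ (x + b) ≠ 0 → b ∈ D) :
    ∑ᶠ a ∈ A, φ (x + a) = ∑ b ∈ D, φ (x + b) := by
  refine finsum_mem_eq_sum_of_subset _ (fun b hb => ?_) hD
  exact h b hb.1 hb.2

theorem mem_ball_of_support {φ : E → ℝ} {M : ℝ} (hM : Function.support φ ⊆ Metric.closedBall 0 M)
    {x b : E} (h : φ (x + b) ≠ 0) : b ∈ Metric.closedBall (-x) M := by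
  have := hM (Function.mem_support.mpr h)
  simp only [Metric.mem_closedBall, dist_eq_norm] at this ⊢
  have e : b - -x = x + b := by abel
  rw [e]
  simpa using this

/-- the sum function is continuous. -/
theorem continuous_sumA {A : Set E} (hdisc : DiscreteSet A) {φ : E → ℝ}
    (hφ : Continuous φ) {M : ℝ} (hM : Function.support φ ⊆ Metric.closedBall 0 M) :
    Continuous (fun x => ∑ᶠ a ∈ A, φ (x + a)) := by
  rw [continuous_iff_continuousAt]
  intro x₀
  have hfin : (A ∩ Metric.closedBall (-x₀) (M + 1)).Finite := finA hdisc _ _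
  have heq : ∀ x ∈ Metric.ball x₀ 1,
      (∑ᶠ a ∈ A, φ (x + a)) = ∑ b ∈ hfin.toFinset, φ (x + b) := by
    intro x hx
    refine lem_sum_eq φ x _ (fun b hb => ?_) (fun b hbA hbne => ?_)
    · have hb' : b ∈ hfin.toFinset := hb
      exact ((Set.Finite.mem_toFinset hfin).mp hb').1
    have h1 := mem_ball_of_support hM hbne
    simp only [Set.Finite.mem_toFinset]
    refine ⟨hbA, ?_⟩
    simp only [Metric.mem_closedBall] at h1 ⊢
    calc dist b (-x₀) ≤ dist b (-x) + dist (-x) (-x₀) := dist_triangle _ _ _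
      _ ≤ M + 1 := by
          have e2 : dist (-x) (-x₀) = dist x x₀ := by
            simp only [dist_eq_norm]
            have : -x - -x₀ = -(x - x₀) := by abel
            rw [this, norm_neg]
          rw [e2]
          have := Metric.mem_ball.mp hx
          linarith
  have hcont : Continuous (fun x => ∑ b ∈ hfin.toFinset, φ (x + b)) := by
    exact continuous_finset_sum _ (fun b _ => hφ.comp (continuous_id.add continuous_const))
  refine ContinuousAt.congr (hcont.continuousAt) ?_
  exact Filter.eventuallyEq_of_mem (Metric.ball_mem_nhds x₀ one_pos) (fun x hx => (heq x hx).symm)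

/-- Count bound from almost periodicity of the set. -/
theorem count_bound_of_AP {A : Set E} (hdisc : DiscreteSet A)
    (hA : RelativelyDense {τ | IsAlmostPeriodOf A 1 τ}) (r : ℝ) :
    ∃ N : ℕ, ∀ c : E, (A ∩ Metric.closedBall c r).ncard ≤ N := by
  obtain ⟨R, hR⟩ := hA
  refine ⟨(A ∩ Metric.closedBall 0 (r + R + 1)).ncard, fun c => ?_⟩
  obtain ⟨τ, hτ, hd⟩ := hR (-c)
  obtain ⟨σ, hσ⟩ := hτ
  classical
  set g : E → E := fun e => if h : e ∈ A then ((σ ⟨e, h⟩ : A) : E) else e with hg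
  have hmaps : Set.MapsTo g (A ∩ Metric.closedBall c r)
      (A ∩ Metric.closedBall 0 (r + R + 1)) := by
    rintro a ⟨haA, hab⟩
    have hga : g a = ((σ ⟨a, haA⟩ : A) : E) := by simp [hg, haA]
    constructor
    · rw [hga]; exact (σ ⟨a, haA⟩).2
    · rw [hga]
      simp only [Metric.mem_closedBall, dist_eq_norm] at hab ⊢
      have h1 : ‖a + τ - ((σ ⟨a, haA⟩ : A) : E)‖ < 1 := hσ ⟨a, haA⟩
      have h2 : ‖c + τ‖ ≤ R := by
        have := hd
        simp only [dist_eq_norm] at this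
        have e : -c - τ = -(c + τ) := by abel
        rw [e, norm_neg] at this
        exact this
      have : ((σ ⟨a, haA⟩ : A) : E) - 0 =
          -(a + τ - ((σ ⟨a, haA⟩ : A) : E)) + (a - c) + (c + τ) := by abel
      rw [this]
      calc ‖-(a + τ - ((σ ⟨a, haA⟩ : A) : E)) + (a - c) + (c + τ)‖
          ≤ ‖-(a + τ - ((σ ⟨a, haA⟩ : A) : E)) + (a - c)‖ + ‖c + τ‖ := norm_add_le _ _
        _ ≤ ‖-(a + τ - ((σ ⟨a, haA⟩ : A) : E))‖ + ‖a - c‖ + ‖c + τ‖ := by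
            have := norm_add_le (-(a + τ - ((σ ⟨a, haA⟩ : A) : E))) (a - c)
            linarith
        _ ≤ 1 + r + R := by
            rw [norm_neg]
            linarith
        _ ≤ r + R + 1 := by linarith
  have hinj : Set.InjOn g (A ∩ Metric.closedBall c r) := by
    rintro a₁ ⟨h1, _⟩ a₂ ⟨h2, _⟩ he
    have e1 : g a₁ = ((σ ⟨a₁, h1⟩ : A) : E) := by simp [hg, h1]
    have e2 : g a₂ = ((σ ⟨a₂, h2⟩ : A) : E) := by simp [hg, h2]
    rw [e1, e2] at he
    have : σ ⟨a₁, h1⟩ = σ ⟨a₂, h2⟩ := Subtype.ext he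
    have := σ.injective this
    exact Subtype.mk_eq_mk.mp this
  exact Set.ncard_le_ncard_of_injOn g hmaps hinj (finA hdisc _ _)


end Aux

section Mpr
variable {p : ℕ}
local notation "E" => EuclideanSpace ℝ (Fin p)

theorem relDense_AP_mono {A : Set E} {ε₁ ε₂ : ℝ} (h : ε₁ ≤ ε₂) :
    {τ : E | IsAlmostPeriodOf A ε₁ τ} ⊆ {τ | IsAlmostPeriodOf A ε₂ τ} := by
  rintro τ ⟨σ, hσ⟩
  exact ⟨σ, fun a => lt_of_lt_of_le (hσ a) h⟩

theorem mpr_main {A : Set E} (hdisc : DiscreteSet A)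
    (hA : ∀ ε : ℝ, 0 < ε → RelativelyDense {τ : E | IsAlmostPeriodOf A ε τ})
    (φ : E → ℝ) (hφc : Continuous φ) (hφs : HasCompactSupport φ) :
    BohrAlmostPeriodic (fun x => ∑ᶠ a ∈ A, φ (x + a)) := by
  classical
  obtain ⟨M₀, hM₀⟩ := hφs.isBounded.subset_closedBall 0
  set M : ℝ := max M₀ 0 with hMdef
  have hM : Function.support φ ⊆ Metric.closedBall 0 M := by
    intro y hy
    have : y ∈ Metric.closedBall 0 M₀ := hM₀ (subset_tsupport φ hy)
    simp only [Metric.mem_closedBall] at this ⊢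
    exact le_trans this (le_max_left _ _)
  constructor
  · exact continuous_sumA hdisc hφc hM
  intro ε hε
  obtain ⟨N, hN⟩ := count_bound_of_AP hdisc (hA 1 one_pos) (M + 1)
  set ε' : ℝ := ε / (2 * ((N : ℝ) + 1)) with hε'def
  have hε'pos : 0 < ε' := by positivity
  obtain ⟨η, hηpos, hη⟩ := Metric.uniformContinuous_iff.mp
    (hφs.uniformContinuous_of_continuous hφc) ε' hε'pos
  set η' : ℝ := min η 1 with hη'def
  have hη'pos : 0 < η' := lt_min hηpos one_pos
  refine relDense_mono ?_ (hA η' hη'pos)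
  intro τ hτ
  obtain ⟨σ, hσ⟩ := hτ
  intro x
  -- the common support finset
  set c : E := -(x + τ) with hcdef
  have hfin : (A ∩ Metric.closedBall c (M + 1)).Finite := finA hdisc _ _
  set H : Finset E := hfin.toFinset with hHdef
  have hHsub : ↑H ⊆ A := by
    intro b hb
    exact ((Set.Finite.mem_toFinset hfin).mp hb).1
  set g : E → E := fun e => if h : e ∈ A then ((σ ⟨e, h⟩ : A) : E) else e with hg
  have hgA : ∀ b (hb : b ∈ A), g b = ((σ ⟨b, hb⟩ : A) : E) := by
    intro b hb; simp [hg, hb]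
  have hgmem : ∀ b ∈ A, g b ∈ A := by
    intro b hb; rw [hgA b hb]; exact (σ ⟨b, hb⟩).2
  have hgnorm : ∀ b (hb : b ∈ A), ‖b + τ - g b‖ < η' := by
    intro b hb; rw [hgA b hb]; exact hσ ⟨b, hb⟩
  -- claim 1
  have claim1 : (∑ᶠ a ∈ A, φ (x + τ + a)) = ∑ b ∈ H, φ (x + τ + b) := by
    refine lem_sum_eq φ (x + τ) H hHsub (fun b hbA hbne => ?_)
    have h1 := mem_ball_of_support hM hbne
    refine (Set.Finite.mem_toFinset hfin).mpr ⟨hbA, ?_⟩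
    simp only [Metric.mem_closedBall] at h1 ⊢
    calc dist b c = dist b (-(x + τ)) := by rw [hcdef]
      _ ≤ M := h1
      _ ≤ M + 1 := by linarith
  -- claim 2
  have himg : ∀ a ∈ H, ∀ a' ∈ H, g a = g a' → a = a' := by
    intro a ha a' ha' he
    have h1 : a ∈ A := hHsub ha
    have h2 : a' ∈ A := hHsub ha'
    rw [hgA a h1, hgA a' h2] at he
    exact Subtype.mk_eq_mk.mp (σ.injective (Subtype.ext he))
  have claim2 : (∑ᶠ a ∈ A, φ (x + a)) = ∑ b ∈ H.image g, φ (x + b) := by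
    refine lem_sum_eq φ x (H.image g) ?_ (fun b hbA hbne => ?_)
    · intro b hb
      obtain ⟨a, ha, rfl⟩ := Finset.mem_image.mp hb
      exact hgmem a (hHsub ha)
    · -- b has preimage a := σ.symm ⟨b, hbA⟩
      set a : A := σ.symm ⟨b, hbA⟩ with hadef
      have hga : g (a : E) = b := by
        rw [hgA (a : E) a.2]
        have : (⟨(a : E), a.2⟩ : A) = a := rfl
        rw [this, hadef, Equiv.apply_symm_apply]
      have hnorm : ‖(a : E) + τ - b‖ < η' := by
        have := hσ a
        rw [hadef] at this ⊢
        rw [Equiv.apply_symm_apply] at this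
        exact this
      have hb1 := mem_ball_of_support hM hbne
      refine Finset.mem_image.mpr ⟨(a : E), ?_, hga⟩
      refine (Set.Finite.mem_toFinset hfin).mpr ⟨a.2, ?_⟩
      simp only [Metric.mem_closedBall, dist_eq_norm] at hb1 ⊢
      have e1 : (a : E) - c = ((a : E) + τ - b) + (b - -x) := by
        rw [hcdef]; abel
      rw [e1]
      calc ‖((a : E) + τ - b) + (b - -x)‖ ≤ ‖(a : E) + τ - b‖ + ‖b - -x‖ := norm_add_le _ _
        _ ≤ M + 1 := by
            have : η' ≤ 1 := min_le_right _ _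
            linarith [hnorm, hb1]
  have claim3 : ∑ b ∈ H.image g, φ (x + b) = ∑ b ∈ H, φ (x + g b) :=
    Finset.sum_image himg
  -- final estimate
  have hcard : H.card ≤ N := by
    have : H.card = (A ∩ Metric.closedBall c (M + 1)).ncard := by
      rw [hHdef, Set.ncard_eq_toFinset_card _ hfin]
    rw [this]; exact hN c
  have hterm : ∀ b ∈ H, |φ (x + τ + b) - φ (x + g b)| ≤ ε' := by
    intro b hb
    have hbA := hHsub hb
    have : dist (x + τ + b) (x + g b) < η := by
      simp only [dist_eq_norm]
      have e : x + τ + b - (x + g b) = b + τ - g b := by abel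
      rw [e]
      exact lt_of_lt_of_le (hgnorm b hbA) (min_le_left _ _)
    have := hη this
    rw [Real.dist_eq] at this
    exact le_of_lt this
  show |(∑ᶠ a ∈ A, φ (x + τ + a)) - ∑ᶠ a ∈ A, φ (x + a)| < ε
  rw [claim1, claim2, claim3, ← Finset.sum_sub_distrib]
  calc |∑ b ∈ H, (φ (x + τ + b) - φ (x + g b))|
      ≤ ∑ b ∈ H, |φ (x + τ + b) - φ (x + g b)| := Finset.abs_sum_le_sum_abs _ _
    _ ≤ H.card • ε' := Finset.sum_le_card_nsmul _ _ _ hterm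
    _ = H.card * ε' := by rw [nsmul_eq_mul]
    _ ≤ N * ε' := by
        have : (H.card : ℝ) ≤ N := by exact_mod_cast hcard
        nlinarith [le_of_lt hε'pos]
    _ < ε := by
        have h2 : (0:ℝ) < 2 * ((N:ℝ) + 1) := by positivity
        rw [hε'def, mul_div_assoc', div_lt_iff₀ h2]
        nlinarith

end Mpr

section Plateau
variable {p : ℕ}
local notation "E" => EuclideanSpace ℝ (Fin p)

/-- plateau function: 1 on S, 0 at distance ≥ m from S. -/
def plateau (S : Set E) (m : ℝ) : E → ℝ :=
  fun x => max 0 (1 - m⁻¹ * Metric.infDist x S)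

theorem plateau_nonneg (S : Set E) (m : ℝ) (x : E) : 0 ≤ plateau S m x := le_max_left _ _

theorem plateau_le_one (S : Set E) {m : ℝ} (hm : 0 < m) (x : E) : plateau S m x ≤ 1 := by
  unfold plateau
  have h1 : 0 ≤ Metric.infDist x S := Metric.infDist_nonneg
  have : 1 - m⁻¹ * Metric.infDist x S ≤ 1 := by
    have : 0 ≤ m⁻¹ * Metric.infDist x S := by positivity
    linarith
  exact max_le (by norm_num) this

theorem plateau_continuous (S : Set E) {m : ℝ} (hm : 0 < m) : Continuous (plateau S m) := by
  unfold plateau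
  exact continuous_const.max ((continuous_const.sub
    ((continuous_const.mul (Metric.continuous_infDist_pt S)))))

theorem plateau_eq_one_of_mem {S : Set E} {m : ℝ} (hm : 0 < m) {x : E} (hx : x ∈ S) :
    plateau S m x = 1 := by
  unfold plateau
  rw [Metric.infDist_zero_of_mem hx]
  simp

theorem plateau_near_of_ne_zero {S : Set E} (hSc : IsCompact S) (hSne : S.Nonempty)
    {m : ℝ} (hm : 0 < m) {x : E} (hne : plateau S m x ≠ 0) : ∃ y ∈ S, dist x y < m := by
  have h1 : Metric.infDist x S < m := by
    by_contra hc
    push_neg at hc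
    have : 1 - m⁻¹ * Metric.infDist x S ≤ 0 := by
      have h2 : 1 ≤ m⁻¹ * Metric.infDist x S := by
        rw [← div_eq_inv_mul, le_div_iff₀ hm]
        linarith
      linarith
    exact hne (max_eq_left this)
  obtain ⟨y, hy, hyd⟩ := hSc.exists_infDist_eq_dist hSne x
  exact ⟨y, hy, by rw [← hyd]; exact h1⟩

theorem plateau_hasCompactSupport {S : Set E} (hSc : IsCompact S) (hSne : S.Nonempty)
    {m R : ℝ} (hm : 0 < m) (hR : S ⊆ Metric.closedBall 0 R) :
    HasCompactSupport (plateau S m) := by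
  have hsupp : Function.support (plateau S m) ⊆ Metric.closedBall 0 (R + m) := by
    intro x hx
    obtain ⟨y, hy, hyd⟩ := plateau_near_of_ne_zero hSc hSne hm hx
    have h2 := hR hy
    simp only [Metric.mem_closedBall] at h2 ⊢
    calc dist x 0 ≤ dist x y + dist y 0 := dist_triangle _ _ _
      _ ≤ R + m := by linarith
  exact HasCompactSupport.intro (isCompact_closedBall 0 (R + m)) (fun x hx => by
    by_contra hc
    exact hx (hsupp (Function.mem_support.mpr hc)))

end Plateau

section MpAux
variable {p : ℕ}
local notation "E" => EuclideanSpace ℝ (Fin p)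

/-- a Bohr almost periodic function is bounded. -/
theorem bohr_bounded {f : E → ℝ} (hf : BohrAlmostPeriodic f) : ∃ C : ℝ, ∀ x, |f x| ≤ C := by
  obtain ⟨hcont, hper⟩ := hf
  obtain ⟨R, hR⟩ := hper 1 one_pos
  obtain ⟨z, hz, hmax⟩ := (isCompact_closedBall (0:E) R).exists_isMaxOn
    ⟨0, Metric.mem_closedBall_self (by
      obtain ⟨s, _, hd⟩ := hR 0
      exact le_trans dist_nonneg hd)⟩
    ((continuous_abs.comp hcont).continuousOn)
  refine ⟨|f z| + 1, fun x => ?_⟩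
  obtain ⟨τ, hτ, hd⟩ := hR x
  have h1 : |f ((x - τ) + τ) - f (x - τ)| < 1 := hτ (x - τ)
  have h2 : (x - τ) + τ = x := by abel
  rw [h2] at h1
  have h3 : x - τ ∈ Metric.closedBall (0:E) R := by
    simp only [Metric.mem_closedBall, dist_eq_norm, sub_zero]
    rw [← dist_eq_norm]
    exact hd
  have h4 : |f (x - τ)| ≤ |f z| := hmax h3
  calc |f x| ≤ |f (x - τ)| + |f x - f (x - τ)| := by
        have := abs_add_le (f (x - τ)) (f x - f (x - τ))
        simpa using this
    _ ≤ |f z| + 1 := by linarith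

end MpAux

section MpCount
variable {p : ℕ}
local notation "E" => EuclideanSpace ℝ (Fin p)

/-- count bound from boundedness of a plateau convolution. -/
theorem count_bound_of_hyp {A : Set E} (hdisc : DiscreteSet A)
    (hyp : ∀ φ : E → ℝ, Continuous φ → HasCompactSupport φ →
      BohrAlmostPeriodic (fun x => ∑ᶠ a ∈ A, φ (x + a)))
    {r : ℝ} (hr : 0 < r) :
    ∃ N : ℕ, ∀ c : E, (A ∩ Metric.closedBall c r).ncard ≤ N := by
  classical
  set S : Set E := Metric.closedBall (0:E) r with hS
  set φ : E → ℝ := plateau S r with hφ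
  have hSc : IsCompact S := isCompact_closedBall _ _
  have hSne : S.Nonempty := ⟨0, Metric.mem_closedBall_self (le_of_lt hr)⟩
  have hcont : Continuous φ := plateau_continuous S hr
  have hcs : HasCompactSupport φ := plateau_hasCompactSupport hSc hSne hr (subset_refl _)
  obtain ⟨C, hC⟩ := bohr_bounded (hyp φ hcont hcs)
  refine ⟨⌊C⌋₊, fun c => ?_⟩
  -- f (-c) ≥ count
  have hfin2 : (A ∩ Metric.closedBall c (2*r)).Finite := finA hdisc _ _
  have hfin1 : (A ∩ Metric.closedBall c r).Finite := finA hdisc _ _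
  have hsum : (∑ᶠ a ∈ A, φ (-c + a)) = ∑ b ∈ hfin2.toFinset, φ (-c + b) := by
    refine lem_sum_eq φ (-c) _ (fun b hb => ((Set.Finite.mem_toFinset hfin2).mp hb).1)
      (fun b hbA hbne => ?_)
    obtain ⟨y, hy, hyd⟩ := plateau_near_of_ne_zero hSc hSne hr hbne
    refine (Set.Finite.mem_toFinset hfin2).mpr ⟨hbA, ?_⟩
    simp only [Metric.mem_closedBall] at hy ⊢
    have h2 : dist y 0 ≤ r := hy
    calc dist b c = ‖b - c‖ := by rw [dist_eq_norm]
      _ = ‖(-c + b - y) + (y - 0)‖ := by congr 1; abel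
      _ ≤ ‖-c + b - y‖ + ‖y - 0‖ := norm_add_le _ _
      _ ≤ 2*r := by
          rw [← dist_eq_norm, ← dist_eq_norm]
          linarith [hyd]
  have hsubset : hfin1.toFinset ⊆ hfin2.toFinset := by
    intro b hb
    have hb' := (Set.Finite.mem_toFinset hfin1).mp hb
    refine (Set.Finite.mem_toFinset hfin2).mpr ⟨hb'.1, ?_⟩
    have := hb'.2
    simp only [Metric.mem_closedBall] at this ⊢
    linarith
  have hone : ∀ b ∈ hfin1.toFinset, (1:ℝ) ≤ φ (-c + b) := by
    intro b hb
    have hb' := (Set.Finite.mem_toFinset hfin1).mp hb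
    have : -c + b ∈ S := by
      simp only [hS, Metric.mem_closedBall]
      have := hb'.2
      simp only [Metric.mem_closedBall] at this
      calc dist (-c + b) 0 = ‖-c + b - 0‖ := by rw [dist_eq_norm]
        _ = ‖b - c‖ := by congr 1; abel
        _ ≤ r := by rw [← dist_eq_norm]; exact this
    show (1:ℝ) ≤ plateau S r (-c + b)
    rw [plateau_eq_one_of_mem hr this]
  have hineq : ((A ∩ Metric.closedBall c r).ncard : ℝ) ≤ C := by
    have e1 : ((A ∩ Metric.closedBall c r).ncard : ℝ) = ∑ b ∈ hfin1.toFinset, (1:ℝ) := by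
      rw [Set.ncard_eq_toFinset_card _ hfin1]
      simp
    rw [e1]
    calc (∑ b ∈ hfin1.toFinset, (1:ℝ)) ≤ ∑ b ∈ hfin1.toFinset, φ (-c + b) :=
          Finset.sum_le_sum hone
      _ ≤ ∑ b ∈ hfin2.toFinset, φ (-c + b) := by
          refine Finset.sum_le_sum_of_subset_of_nonneg hsubset (fun b _ _ => plateau_nonneg _ _ _)
      _ = ∑ᶠ a ∈ A, φ (-c + a) := hsum.symm
      _ ≤ |∑ᶠ a ∈ A, φ (-c + a)| := le_abs_self _
      _ ≤ C := hC (-c)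
  have hC0 : (0:ℝ) ≤ C := le_trans (abs_nonneg _) (hC 0)
  exact Nat.le_floor hineq

/-- uniform continuity of the sum function, given a count bound. -/
theorem unif_cont_sumA {A : Set E} (hdisc : DiscreteSet A) {φ : E → ℝ}
    (hφc : Continuous φ) (hφs : HasCompactSupport φ)
    {M : ℝ} (hM : Function.support φ ⊆ Metric.closedBall 0 M)
    {N : ℕ} (hN : ∀ c : E, (A ∩ Metric.closedBall c (M+1)).ncard ≤ N) :
    ∀ δ : ℝ, 0 < δ → ∃ η : ℝ, 0 < η ∧ ∀ u v : E, dist u v ≤ η →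
      |(∑ᶠ a ∈ A, φ (u + a)) - ∑ᶠ a ∈ A, φ (v + a)| ≤ δ := by
  classical
  intro δ hδ
  have hδ' : 0 < δ / (N + 1) := by positivity
  obtain ⟨η, hηpos, hη⟩ := Metric.uniformContinuous_iff.mp
    (hφs.uniformContinuous_of_continuous hφc) (δ / (N+1)) hδ'
  refine ⟨min (η/2) (1/2), by positivity, fun u v huv => ?_⟩
  have huv1 : dist u v ≤ 1 := le_trans huv (le_trans (min_le_right _ _) (by norm_num))
  have huvη : dist u v < η := lt_of_le_of_lt (le_trans huv (min_le_left _ _)) (by linarith)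
  have hfin : (A ∩ Metric.closedBall (-v) (M+1)).Finite := finA hdisc _ _
  set D := hfin.toFinset with hD
  have hsum_u : (∑ᶠ a ∈ A, φ (u + a)) = ∑ b ∈ D, φ (u + b) := by
    refine lem_sum_eq φ u D (fun b hb => ((Set.Finite.mem_toFinset hfin).mp hb).1)
      (fun b hbA hbne => ?_)
    have h1 := mem_ball_of_support hM hbne
    refine (Set.Finite.mem_toFinset hfin).mpr ⟨hbA, ?_⟩
    simp only [Metric.mem_closedBall] at h1 ⊢
    calc dist b (-v) ≤ dist b (-u) + dist (-u) (-v) := dist_triangle _ _ _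
      _ ≤ M + 1 := by
          have e : dist (-u) (-v) = dist u v := by
            simp only [dist_eq_norm]
            have : -u - -v = -(u - v) := by abel
            rw [this, norm_neg]
          rw [e]; linarith
  have hsum_v : (∑ᶠ a ∈ A, φ (v + a)) = ∑ b ∈ D, φ (v + b) := by
    refine lem_sum_eq φ v D (fun b hb => ((Set.Finite.mem_toFinset hfin).mp hb).1)
      (fun b hbA hbne => ?_)
    have h1 := mem_ball_of_support hM hbne
    refine (Set.Finite.mem_toFinset hfin).mpr ⟨hbA, ?_⟩
    simp only [Metric.mem_closedBall] at h1 ⊢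
    linarith [h1]
  rw [hsum_u, hsum_v, ← Finset.sum_sub_distrib]
  have hcard : D.card ≤ N := by
    have : D.card = (A ∩ Metric.closedBall (-v) (M+1)).ncard :=
      (Set.ncard_eq_toFinset_card _ hfin).symm
    rw [this]; exact hN (-v)
  calc |∑ b ∈ D, (φ (u + b) - φ (v + b))| ≤ ∑ b ∈ D, |φ (u + b) - φ (v + b)| :=
        Finset.abs_sum_le_sum_abs _ _
    _ ≤ D.card • (δ / (N+1)) := by
        refine Finset.sum_le_card_nsmul _ _ _ (fun b _ => ?_)
        have : dist (u + b) (v + b) < η := by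
          simp only [dist_eq_norm]
          have e : u + b - (v + b) = u - v := by abel
          rw [e, ← dist_eq_norm]
          exact huvη
        have := hη this
        rw [Real.dist_eq] at this
        exact le_of_lt this
    _ = D.card * (δ / (N+1)) := by rw [nsmul_eq_mul]
    _ ≤ N * (δ / (N+1)) := by
        have : (D.card : ℝ) ≤ N := by exact_mod_cast hcard
        have h0 : (0:ℝ) ≤ δ / (N+1) := le_of_lt hδ'
        nlinarith
    _ ≤ δ := by
        rw [mul_div_assoc']
        rw [div_le_iff₀ (by positivity : (0:ℝ) < (N:ℝ)+1)]
        nlinarith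
end MpCount

section Nets
variable {p : ℕ}
local notation "E" => EuclideanSpace ℝ (Fin p)

theorem net_of_ap {f : E → ℝ}
    (hper : ∀ δ : ℝ, 0 < δ → RelativelyDense {τ : E | ∀ x, |f (x + τ) - f x| < δ})
    (huc : ∀ δ : ℝ, 0 < δ → ∃ η : ℝ, 0 < η ∧ ∀ u v : E, dist u v ≤ η → |f u - f v| ≤ δ)
    {δ : ℝ} (hδ : 0 < δ) :
    ∃ T : Set E, T.Finite ∧ ∀ y : E, ∃ t ∈ T, ∀ x, |f (x + y) - f (x + t)| ≤ δ := by
  obtain ⟨η, hηpos, hη⟩ := huc (δ/2) (by positivity)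
  obtain ⟨R, hR⟩ := hper (δ/4) (by positivity)
  obtain ⟨T, hTfin, hTcov⟩ := Metric.totallyBounded_iff.mp
    (isCompact_closedBall (0:E) R).totallyBounded η hηpos
  refine ⟨T, hTfin, fun y => ?_⟩
  obtain ⟨τ, hτ, hd⟩ := hR y
  set z : E := y - τ with hz
  have hzball : z ∈ Metric.closedBall (0:E) R := by
    simp only [Metric.mem_closedBall, dist_eq_norm, sub_zero, hz]
    rw [← dist_eq_norm]; exact hd
  obtain ⟨t₀, ht₀, hzt₀⟩ := Set.mem_iUnion₂.mp (hTcov hzball)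
  refine ⟨t₀, ht₀, fun x => ?_⟩
  have h1 : |f ((x + z) + τ) - f (x + z)| < δ/4 := hτ (x + z)
  have e1 : (x + z) + τ = x + y := by rw [hz]; abel
  rw [e1] at h1
  have h2 : |f (x + z) - f (x + t₀)| ≤ δ/2 := by
    refine hη _ _ ?_
    have e2 : dist (x + z) (x + t₀) = dist z t₀ := by
      simp only [dist_eq_norm]
      congr 1
      abel
    rw [e2]
    exact le_of_lt (Metric.mem_ball.mp hzt₀)
  calc |f (x + y) - f (x + t₀)|
      ≤ |f (x + y) - f (x + z)| + |f (x + z) - f (x + t₀)| := abs_sub_le _ _ _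
    _ ≤ δ/4 + δ/2 := by linarith
    _ ≤ δ := by linarith

theorem combine_net {ι : Type} [Fintype ι] (F : ι → E → ℝ)
    (hnet : ∀ (i : ι) (δ : ℝ), 0 < δ → ∃ T : Set E, T.Finite ∧
       ∀ y : E, ∃ t ∈ T, ∀ x, |F i (x + y) - F i (x + t)| ≤ δ)
    {δ : ℝ} (hδ : 0 < δ) :
    RelativelyDense {τ : E | ∀ (i : ι) (x : E), |F i (x + τ) - F i x| ≤ δ} := by
  classical
  have hδ2 : 0 < δ/2 := by positivity
  choose T hTfin hTnet using fun i => hnet i (δ/2) hδ2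
  choose c hcmem hcspec using fun y i => hTnet i y
  set Im : Set (ι → E) := Set.range c with hIm
  have hImfin : Im.Finite := by
    have hsub : Im ⊆ Set.pi Set.univ T := by
      rintro κ ⟨y, rfl⟩
      intro i _
      exact hcmem y i
    exact (Set.Finite.pi (fun i => hTfin i)).subset hsub
  set rep : (ι → E) → E := fun κ => if h : ∃ y, c y = κ then h.choose else 0 with hrep
  set Tstar : Set E := rep '' Im with hTstar
  have hTstarfin : Tstar.Finite := hImfin.image _
  obtain ⟨R, hR⟩ := (hTstarfin.image norm).bddAbove
  refine ⟨R, fun y => ?_⟩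
  have hex : ∃ y', c y' = c y := ⟨y, rfl⟩
  set ystar : E := rep (c y) with hystar
  have hcage : c ystar = c y := by
    rw [hystar, hrep]
    simp only [dif_pos hex]
    exact hex.choose_spec
  have hystarmem : ystar ∈ Tstar := ⟨c y, ⟨y, rfl⟩, rfl⟩
  refine ⟨y - ystar, ?_, ?_⟩
  · intro i x
    have h1 : |F i ((x - ystar) + y) - F i ((x - ystar) + c y i)| ≤ δ/2 := hcspec y i (x - ystar)
    have h2 : |F i ((x - ystar) + ystar) - F i ((x - ystar) + c ystar i)| ≤ δ/2 :=
      hcspec ystar i (x - ystar)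
    rw [hcage] at h2
    have e1 : (x - ystar) + y = x + (y - ystar) := by abel
    have e2 : (x - ystar) + ystar = x := by abel
    rw [e1] at h1
    rw [e2] at h2
    calc |F i (x + (y - ystar)) - F i x|
        ≤ |F i (x + (y - ystar)) - F i ((x - ystar) + c y i)| +
            |F i ((x - ystar) + c y i) - F i x| := abs_sub_le _ _ _
      _ ≤ δ/2 + δ/2 := by
          rw [abs_sub_comm] at h2
          linarith
      _ = δ := by ring
  · have e3 : dist y (y - ystar) = ‖ystar‖ := by
      simp only [dist_eq_norm]
      congr 1
      abel
    rw [e3]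
    exact hR ⟨ystar, hystarmem, rfl⟩

end Nets

section Geometry
variable {p : ℕ}
local notation "E" => EuclideanSpace ℝ (Fin p)


theorem coord_abs_le_norm (x : E) (i : Fin p) : |x i| ≤ ‖x‖ := by
  rw [EuclideanSpace.norm_eq]
  have h1 : |x i| = Real.sqrt (‖x i‖^2) := by
    rw [Real.sqrt_sq_eq_abs]
    simp [abs_abs]
  rw [h1]
  apply Real.sqrt_le_sqrt
  exact Finset.single_le_sum (f := fun j => ‖x j‖^2) (fun j _ => by positivity)
    (Finset.mem_univ i)

theorem norm_le_of_coord {x : E} {t : ℝ} (ht : 0 ≤ t) (h : ∀ i, |x i| ≤ t) :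
    ‖x‖ ≤ ((p:ℝ)+1) * t := by
  rw [EuclideanSpace.norm_eq]
  have h1 : (∑ i, ‖x i‖^2) ≤ p * t^2 := by
    calc (∑ i : Fin p, ‖x i‖^2) ≤ ∑ _i : Fin p, t^2 := by
          refine Finset.sum_le_sum (fun i _ => ?_)
          have := h i
          have h2 : ‖x i‖ = |x i| := rfl
          rw [h2]
          nlinarith [abs_nonneg (x i)]
      _ = p * t^2 := by simp [Finset.sum_const, nsmul_eq_mul]
  calc Real.sqrt (∑ i, ‖x i‖^2) ≤ Real.sqrt (((p:ℝ)+1)^2 * t^2) := by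
        apply Real.sqrt_le_sqrt
        have hp : (0:ℝ) ≤ (p:ℝ) := Nat.cast_nonneg p
        nlinarith [sq_nonneg t, mul_nonneg hp (sq_nonneg t),
          mul_nonneg (mul_nonneg hp hp) (sq_nonneg t)]
    _ = ((p:ℝ)+1) * t := by
        rw [← mul_pow, Real.sqrt_sq (by positivity)]

theorem grid_lemma (ρ Rb : ℝ) (hρ : 0 < ρ) (hRb : 0 ≤ Rb) :
    ∃ (G : Set E) (RG : ℝ), G.Finite ∧ (∀ v ∈ G, ‖v‖ ≤ RG) ∧
      ∀ x : E, ‖x‖ ≤ Rb → ∃ v ∈ G, ‖x - v‖ ≤ ((p:ℝ)+1) * ρ := by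
  classical
  set n₀ : ℤ := ⌈Rb / ρ⌉ + 1 with hn₀
  have hceil : (0:ℤ) ≤ ⌈Rb / ρ⌉ := Int.ceil_nonneg (by positivity)
  have hn₀R : Rb / ρ + 1 ≤ (n₀ : ℝ) := by
    rw [hn₀]
    push_cast
    linarith [Int.le_ceil (Rb / ρ)]
  set K : Set (Fin p → ℤ) := Set.pi Set.univ (fun _ => Set.Icc (-n₀) n₀) with hK
  have hKfin : K.Finite := Set.Finite.pi (fun _ => Set.finite_Icc _ _)
  set emb : (Fin p → ℤ) → E := fun k => WithLp.toLp 2 (fun i => (k i : ℝ) * ρ : Fin p → ℝ) with hemb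
  refine ⟨emb '' K, ((p:ℝ)+1) * ((n₀:ℝ) * ρ), hKfin.image _, ?_, ?_⟩
  · rintro v ⟨k, hk, rfl⟩
    refine norm_le_of_coord (by positivity) (fun i => ?_)
    have hki : k i ∈ Set.Icc (-n₀) n₀ := hk i (Set.mem_univ i)
    have h1 : |k i| ≤ n₀ := abs_le.mpr ⟨hki.1, hki.2⟩
    have h2 : |(k i : ℝ)| ≤ (n₀ : ℝ) := by exact_mod_cast h1
    have h3 : |(emb k) i| = |(k i : ℝ)| * ρ := by
      rw [hemb]
      simp only [abs_mul, abs_of_pos hρ]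
    rw [h3]
    nlinarith
  · intro x hx
    set k : Fin p → ℤ := fun i => round (x i / ρ) with hk'
    have hxi : ∀ i, |x i / ρ| ≤ Rb / ρ := by
      intro i
      rw [abs_div, abs_of_pos hρ]
      have := le_trans (coord_abs_le_norm x i) hx
      gcongr
    have hmem : k ∈ K := by
      intro i _
      have h1 : |(k i : ℝ)| ≤ |x i / ρ| + 1/2 := by
        have := abs_sub_round (x i / ρ)
        have h2 : |(k i : ℝ)| = |(x i / ρ) - ((x i / ρ) - (k i : ℝ))| := by congr 1; ring
        rw [h2]
        calc |(x i / ρ) - ((x i / ρ) - (k i : ℝ))| ≤ |x i / ρ| + |(x i / ρ) - (k i : ℝ)| := by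
              exact abs_sub _ _
          _ ≤ |x i / ρ| + 1/2 := by
              have h3 : |(x i / ρ) - (k i : ℝ)| ≤ 1/2 := by
                rw [hk']
                exact abs_sub_round (x i / ρ)
              linarith
      have h4 : |(k i : ℝ)| ≤ (n₀ : ℝ) := by
        calc |(k i : ℝ)| ≤ |x i / ρ| + 1/2 := h1
          _ ≤ Rb / ρ + 1/2 := by linarith [hxi i]
          _ ≤ (n₀ : ℝ) := by linarith
      have h5 : |k i| ≤ n₀ := by
        rw [← Int.cast_abs] at h4
        exact_mod_cast h4
      exact Set.mem_Icc.mpr (abs_le.mp h5)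
    refine ⟨emb k, Set.mem_image_of_mem _ hmem, ?_⟩
    refine norm_le_of_coord (le_of_lt hρ) (fun i => ?_)
    have hco : (x - emb k) i = x i - (k i : ℝ) * ρ := rfl
    rw [hco]
    have h6 : x i - (k i : ℝ) * ρ = (x i / ρ - (k i : ℝ)) * ρ := by
      field_simp
    rw [h6, abs_mul, abs_of_pos hρ]
    have h7 : |x i / ρ - (k i : ℝ)| ≤ 1/2 := by
      rw [hk']
      exact abs_sub_round (x i / ρ)
    nlinarith


/-- one step of the chain relation. -/
def cstep (B : Set E) (s : ℝ) : E → E → Prop := fun u v => v ∈ B ∧ dist u v ≤ s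

/-- the chain component of `b`. -/
def comp (B : Set E) (s : ℝ) (b : E) : Set E := {x | Relation.ReflTransGen (cstep B s) b x}

theorem self_mem_comp {B : Set E} {s : ℝ} (b : E) : b ∈ comp B s b :=
  Relation.ReflTransGen.refl

theorem comp_subset {B : Set E} {s : ℝ} {b : E} (hb : b ∈ B) : comp B s b ⊆ B := by
  intro x hx
  induction hx with
  | refl => exact hb
  | tail _ h2 _ => exact h2.1

theorem mem_comp_of_step {B : Set E} {s : ℝ} {b x y : E} (hx : x ∈ comp B s b)
    (hy : y ∈ B) (hd : dist x y ≤ s) : y ∈ comp B s b :=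
  Relation.ReflTransGen.tail hx ⟨hy, hd⟩

theorem mem_comp_symm {B : Set E} {s : ℝ} {b x : E} (hb : b ∈ B) (hx : x ∈ comp B s b) :
    b ∈ comp B s x := by
  induction hx with
  | refl => exact Relation.ReflTransGen.refl
  | @tail u v h1 h2 ih =>
      have hu : u ∈ B := by
        rcases (Relation.ReflTransGen.cases_tail h1) with h | ⟨w, _, hw⟩
        · rw [h]; exact hb
        · exact hw.1
      exact Relation.ReflTransGen.head ⟨hu, by rw [dist_comm]; exact h2.2⟩ ih

theorem comp_eq_of_mem {B : Set E} {s : ℝ} {b x : E} (hb : b ∈ B) (hx : x ∈ comp B s b) :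
    comp B s x = comp B s b := by
  apply Set.eq_of_subset_of_subset
  · intro z hz
    exact Relation.ReflTransGen.trans hx hz
  · intro z hz
    exact Relation.ReflTransGen.trans (mem_comp_symm hb hx) hz

/-- reach sets. -/
def reachIn (B : Set E) (s : ℝ) (b : E) : ℕ → Set E
  | 0 => {b}
  | (d+1) => reachIn B s b d ∪ {x | x ∈ B ∧ ∃ y ∈ reachIn B s b d, dist y x ≤ s}

theorem reachIn_mono {B : Set E} {s : ℝ} {b : E} (d : ℕ) :
    reachIn B s b d ⊆ reachIn B s b (d+1) := Set.subset_union_left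

theorem reachIn_mono' {B : Set E} {s : ℝ} {b : E} {d e : ℕ} (h : d ≤ e) :
    reachIn B s b d ⊆ reachIn B s b e := by
  induction e with
  | zero => rw [Nat.le_zero.mp h]
  | succ e ih =>
      rcases Nat.lt_or_ge d (e+1) with h1 | h1
      · exact (ih (Nat.lt_succ_iff.mp h1)).trans (reachIn_mono e)
      · rw [Nat.le_antisymm h h1]

theorem reachIn_radius {B : Set E} {s : ℝ} (hs : 0 ≤ s) {b : E} (d : ℕ) :
    reachIn B s b d ⊆ Metric.closedBall b (d * s) := by
  induction d with
  | zero =>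
      intro x hx
      rw [Set.mem_singleton_iff.mp hx]
      simp [Metric.mem_closedBall]
  | succ d ih =>
      intro x hx
      rcases hx with hx | ⟨_, y, hy, hd⟩
      · have := ih hx
        simp only [Metric.mem_closedBall] at this ⊢
        have : (d:ℝ) * s ≤ (d+1) * s := by nlinarith
        try simp only [Metric.mem_closedBall] at *
        push_cast
        linarith [Metric.mem_closedBall.mp (ih hx)]
      · have h1 := Metric.mem_closedBall.mp (ih hy)
        simp only [Metric.mem_closedBall]
        calc dist x b ≤ dist x y + dist y b := dist_triangle _ _ _
          _ ≤ s + d * s := by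
              rw [dist_comm] at hd
              linarith [hd]
          _ = ((d:ℝ)+1) * s := by ring
          _ = ((d+1 : ℕ):ℝ) * s := by push_cast; ring
      
theorem reachIn_subset {B : Set E} {s : ℝ} {b : E} (d : ℕ) :
    reachIn B s b d ⊆ insert b B := by
  induction d with
  | zero => intro x hx; rw [Set.mem_singleton_iff.mp hx]; exact Set.mem_insert _ _
  | succ d ih =>
      intro x hx
      rcases hx with hx | ⟨hxB, _⟩
      · exact ih hx
      · exact Set.mem_insert_of_mem _ hxB

theorem reachIn_stab {B : Set E} {s : ℝ} {b : E} {d : ℕ}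
    (h : reachIn B s b (d+1) ⊆ reachIn B s b d) (e : ℕ) :
    reachIn B s b (d+e) = reachIn B s b d := by
  induction e with
  | zero => rfl
  | succ e ih =>
      have : d + (e+1) = (d+e)+1 := by ring
      rw [this]
      show reachIn B s b (d+e) ∪ _ = _
      rw [ih]
      apply Set.eq_of_subset_of_subset
      · apply Set.union_subset (subset_refl _)
        intro x hx
        exact h (Set.mem_union_right _ hx)
      · exact Set.subset_union_left

theorem comp_subset_reachIn {B : Set E} {s : ℝ} {b : E} {d : ℕ}
    (h : reachIn B s b (d+1) ⊆ reachIn B s b d) :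
    comp B s b ⊆ reachIn B s b d := by
  intro x hx
  induction hx with
  | refl => exact reachIn_mono' (Nat.zero_le d) rfl
  | @tail u v h1 h2 ih =>
      refine h (Set.mem_union_right _ ?_)
      exact ⟨h2.1, u, ih, h2.2⟩

/-- stabilization within n steps given the count bound. -/
theorem reachIn_stab_exists {B : Set E} {s ε : ℝ} (hs : 0 ≤ s) {n : ℕ}
    (hsn : ((n:ℝ)+1) * s ≤ ε)
    (hfinB : ∀ (c : E) (r : ℝ), (B ∩ Metric.closedBall c r).Finite)
    (hcount : ∀ c : E, (B ∩ Metric.closedBall c ε).ncard ≤ n)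
    {b : E} (hb : b ∈ B) :
    ∃ d : ℕ, d ≤ n ∧ reachIn B s b (d+1) ⊆ reachIn B s b d := by
  by_contra hc
  push_neg at hc
  have hgrow : ∀ d : ℕ, d ≤ n + 1 → d + 1 ≤ (reachIn B s b d).ncard := by
    intro d
    induction d with
    | zero =>
        intro _
        show 1 ≤ (reachIn B s b 0).ncard
        show 1 ≤ ({b} : Set E).ncard
        rw [Set.ncard_singleton]
    | succ d ih =>
        intro hd
        have hd' : d ≤ n := by omega
        have hne := hc d hd'
        obtain ⟨w, hw1, hw2⟩ := Set.not_subset.mp hne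
        have hssub : reachIn B s b d ⊂ reachIn B s b (d+1) :=
          Set.ssubset_iff_of_subset (reachIn_mono d) |>.mpr ⟨w, hw1, hw2⟩
        have hfin : (reachIn B s b (d+1)).Finite := by
          refine Set.Finite.subset (Set.Finite.insert b (hfinB b (((d:ℝ)+1) * s))) ?_
          intro x hx
          rcases reachIn_subset (d+1) hx with h | h
          · rw [h]; exact Set.mem_insert _ _
          · refine Set.mem_insert_of_mem _ ⟨h, ?_⟩
            have := reachIn_radius hs (d+1) hx
            simp only [Metric.mem_closedBall] at this ⊢
            push_cast at this ⊢
            linarith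
        have := Set.ncard_lt_ncard hssub hfin
        have := ih (by omega)
        omega
  have h1 := hgrow (n+1) (le_refl _)
  have h2 : (reachIn B s b (n+1)).ncard ≤ n := by
    have hsub : reachIn B s b (n+1) ⊆ B ∩ Metric.closedBall b ε := by
      intro x hx
      constructor
      · rcases reachIn_subset (n+1) hx with h | h
        · rw [h]; exact hb
        · exact h
      · have := reachIn_radius hs (n+1) hx
        simp only [Metric.mem_closedBall] at this ⊢
        push_cast at this
        linarith
    calc (reachIn B s b (n+1)).ncard ≤ (B ∩ Metric.closedBall b ε).ncard :=
          Set.ncard_le_ncard hsub (hfinB b ε)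
      _ ≤ n := hcount b
  omega

theorem comp_radius {B : Set E} {s ε : ℝ} (hs : 0 ≤ s) {n : ℕ}
    (hsn : ((n:ℝ)+1) * s ≤ ε)
    (hfinB : ∀ (c : E) (r : ℝ), (B ∩ Metric.closedBall c r).Finite)
    (hcount : ∀ c : E, (B ∩ Metric.closedBall c ε).ncard ≤ n)
    {b : E} (hb : b ∈ B) :
    comp B s b ⊆ Metric.closedBall b ((n:ℝ) * s) := by
  obtain ⟨d, hd, hstab⟩ := reachIn_stab_exists hs hsn hfinB hcount hb
  refine (comp_subset_reachIn hstab).trans ?_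
  refine (reachIn_radius hs d).trans ?_
  apply Metric.closedBall_subset_closedBall
  have : (d:ℝ) ≤ n := by exact_mod_cast hd
  nlinarith

theorem comp_finite {B : Set E} {s ε : ℝ} (hs : 0 ≤ s) {n : ℕ}
    (hsn : ((n:ℝ)+1) * s ≤ ε)
    (hfinB : ∀ (c : E) (r : ℝ), (B ∩ Metric.closedBall c r).Finite)
    (hcount : ∀ c : E, (B ∩ Metric.closedBall c ε).ncard ≤ n)
    {b : E} (hb : b ∈ B) :
    (comp B s b).Finite := by
  refine Set.Finite.subset (hfinB b ((n:ℝ)*s)) ?_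
  intro x hx
  exact ⟨comp_subset hb hx, comp_radius hs hsn hfinB hcount hb hx⟩


theorem nat_eq_of_abs_sub_lt_one {m k : ℕ} (h : |(m:ℝ) - (k:ℝ)| < 1) : m = k := by
  rcases Nat.lt_trichotomy m k with h1 | h1 | h1
  · exfalso
    have : (m:ℝ) + 1 ≤ k := by exact_mod_cast h1
    rw [abs_sub_comm, abs_of_nonneg (by linarith)] at h
    linarith
  · exact h1
  · exfalso
    have : (k:ℝ) + 1 ≤ m := by exact_mod_cast h1
    rw [abs_of_nonneg (by linarith)] at h
    linarith

theorem exists_bijOn_of_ncard_eq {U V : Set E} (hU : U.Finite) (hV : V.Finite)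
    (h : U.ncard = V.ncard) : ∃ g : E → E, Set.BijOn g U V := by
  classical
  have hUf : Finite ↥U := hU.to_subtype
  have hVf : Finite ↥V := hV.to_subtype
  have hcard : Nat.card ↥U = Nat.card ↥V := by
    rw [Nat.card_coe_set_eq, Nat.card_coe_set_eq]
    exact h
  obtain ⟨e⟩ := Finite.card_eq.mp hcard
  refine ⟨fun x => if hx : x ∈ U then (e ⟨x, hx⟩ : E) else x, ?_, ?_, ?_⟩
  · intro x hx
    simp only [dif_pos hx]
    exact (e ⟨x, hx⟩).2
  · intro x₁ hx₁ x₂ hx₂ he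
    simp only [dif_pos hx₁, dif_pos hx₂] at he
    have := e.injective (Subtype.ext he)
    exact Subtype.mk_eq_mk.mp this
  · intro v hv
    refine ⟨(e.symm ⟨v, hv⟩ : E), (e.symm ⟨v, hv⟩).2, ?_⟩
    simp only [dif_pos (e.symm ⟨v, hv⟩).2]
    have : (⟨((e.symm ⟨v, hv⟩ : ↥U) : E), (e.symm ⟨v, hv⟩).2⟩ : ↥U) = e.symm ⟨v, hv⟩ := rfl
    rw [this, Equiv.apply_symm_apply]

end Geometry

section MpMain
variable {p : ℕ}
local notation "E" => EuclideanSpace ℝ (Fin p)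

theorem mp_main {A : Set E} (hdisc : DiscreteSet A)
    (hyp : ∀ φ : E → ℝ, Continuous φ → HasCompactSupport φ →
      BohrAlmostPeriodic (fun x => ∑ᶠ a ∈ A, φ (x + a)))
    {ε : ℝ} (hε : 0 < ε) : RelativelyDense {τ : E | IsAlmostPeriodOf A ε τ} := by
  classical
  obtain ⟨N, hN⟩ := count_bound_of_hyp hdisc hyp hε
  set n : ℕ := 2*N + 2 with hn
  set s : ℝ := ε / (32 * ((n:ℝ)+1)) with hsdef
  have hs : 0 < s := by rw [hsdef]; positivity
  have hsn' : ((n:ℝ)+1) * s = ε/32 := by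
    rw [hsdef]
    field_simp
  have hsn : ((n:ℝ)+1) * s ≤ ε := by rw [hsn']; linarith
  have hns : (n:ℝ) * s ≤ ε/32 := by
    have h1 : (n:ℝ) * s ≤ ((n:ℝ)+1) * s := by nlinarith
    linarith [hsn']
  set m : ℝ := s/16 with hmdef
  have hm : 0 < m := by rw [hmdef]; positivity
  set ρ : ℝ := s/(16*((p:ℝ)+1)) with hρdef
  have hρ : 0 < ρ := by rw [hρdef]; positivity
  have herr : ((p:ℝ)+1) * ρ = m := by
    rw [hρdef, hmdef]
    have hp1 : ((p:ℝ)+1) ≠ 0 := by positivity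
    field_simp
  obtain ⟨G, RG, hGfin, hGbound, hGround⟩ := grid_lemma (p := p) ρ ε hρ (le_of_lt hε)
  obtain ⟨v₀, hv₀G, -⟩ := hGround 0 (by rw [norm_zero]; exact le_of_lt hε)
  have hRG0 : 0 ≤ RG := le_trans (norm_nonneg v₀) (hGbound v₀ hv₀G)
  set Msupp : ℝ := RG + s/4 + m with hMsuppdef
  have hMsupp0 : 0 < Msupp + 1 := by rw [hMsuppdef]; positivity
  obtain ⟨N', hN'⟩ := count_bound_of_hyp hdisc hyp hMsupp0
  set GF : Finset E := hGfin.toFinset with hGFdef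
  set St : Finset E → Set E :=
    fun t => ⋃ v ∈ (t : Set E), Metric.closedBall v (s/4) with hStdef
  have hStfacts : ∀ t : Finset E, ↑t ⊆ G → t.Nonempty →
      IsCompact (St t) ∧ (St t).Nonempty ∧ St t ⊆ Metric.closedBall 0 (RG + s/4) := by
    intro t htG htne
    have hcl : IsClosed (St t) := by
      rw [hStdef]
      exact Set.Finite.isClosed_biUnion t.finite_toSet (fun v _ => Metric.isClosed_closedBall)
    have hsub : St t ⊆ Metric.closedBall 0 (RG + s/4) := by
      intro y hy
      rw [hStdef] at hy
      simp only [Set.mem_iUnion] at hy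
      obtain ⟨v, hv, hyv⟩ := hy
      have hvG : v ∈ G := htG hv
      have h1 := hGbound v hvG
      have hyv' : dist y v ≤ s/4 := Metric.mem_closedBall.mp hyv
      rw [Metric.mem_closedBall]
      calc dist y 0 ≤ dist y v + dist v 0 := dist_triangle _ _ _
        _ ≤ RG + s/4 := by
            have h2 : dist v 0 = ‖v‖ := by rw [dist_eq_norm, sub_zero]
            rw [h2]
            linarith
    have hcomp : IsCompact (St t) :=
      (isCompact_closedBall (0:E) (RG + s/4)).of_isClosed_subset hcl hsub
    have hne : (St t).Nonempty := by
      obtain ⟨v, hv⟩ := htne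
      refine ⟨v, ?_⟩
      rw [hStdef]
      refine Set.mem_biUnion (Finset.mem_coe.mpr hv) ?_
      exact Metric.mem_closedBall_self (by positivity)
    exact ⟨hcomp, hne, hsub⟩
  set F : ↥GF.powerset → E → ℝ := fun t =>
    if (t : Finset E).Nonempty then
      (fun x => ∑ᶠ a ∈ A, plateau (St (t : Finset E)) m (x + a)) else fun _ => 0
    with hFdef
  have hsubG : ∀ i : ↥GF.powerset, ↑(i : Finset E) ⊆ G := by
    intro i v hv
    have h1 := Finset.mem_powerset.mp i.2 hv
    exact (Set.Finite.mem_toFinset hGfin).mp h1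
  have hsupp : ∀ t : Finset E, ↑t ⊆ G → t.Nonempty →
      Function.support (plateau (St t) m) ⊆ Metric.closedBall 0 Msupp := by
    intro t htG htne x hx
    obtain ⟨hcomp, hSne, hSsub⟩ := hStfacts t htG htne
    obtain ⟨y, hy, hyd⟩ := plateau_near_of_ne_zero hcomp hSne hm hx
    have h1 := hSsub hy
    simp only [Metric.mem_closedBall] at h1 ⊢
    calc dist x 0 ≤ dist x y + dist y 0 := dist_triangle _ _ _
      _ ≤ Msupp := by rw [hMsuppdef]; linarith
  have hnet : ∀ (i : ↥GF.powerset) (δ : ℝ), 0 < δ → ∃ T : Set E, T.Finite ∧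
      ∀ y : E, ∃ t ∈ T, ∀ x, |F i (x + y) - F i (x + t)| ≤ δ := by
    intro i δ hδ
    by_cases hne : (i : Finset E).Nonempty
    · obtain ⟨hcomp, hSne, hSsub⟩ := hStfacts _ (hsubG i) hne
      have hφc : Continuous (plateau (St (i : Finset E)) m) := plateau_continuous _ hm
      have hφs : HasCompactSupport (plateau (St (i : Finset E)) m) :=
        plateau_hasCompactSupport hcomp hSne hm hSsub
      have hFi : F i = fun x => ∑ᶠ a ∈ A, plateau (St (i : Finset E)) m (x + a) := by
        rw [hFdef]
        exact if_pos hne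
      rw [hFi]
      have hB := hyp _ hφc hφs
      exact net_of_ap hB.2
        (unif_cont_sumA hdisc hφc hφs (hsupp _ (hsubG i) hne) hN') hδ
    · have hFi : F i = fun _ => 0 := by rw [hFdef]; exact if_neg hne
      rw [hFi]
      exact ⟨{0}, Set.finite_singleton 0, fun y => ⟨0, rfl, fun x => by simpa using le_of_lt hδ⟩⟩
  have hcommon := combine_net F hnet (show (0:ℝ) < 1/4 by norm_num)
  refine relDense_mono ?_ hcommon
  intro τ hτ
  have hτ' : ∀ (i : ↥GF.powerset) (x : E), |F i (x + τ) - F i x| ≤ 1/4 := hτ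
  show IsAlmostPeriodOf A ε τ
  -- the doubled set
  set B : Set E := A ∪ {x : E | x - τ ∈ A} with hBdef
  have hAB : A ⊆ B := Set.subset_union_left
  have hAτB : ∀ a ∈ A, a + τ ∈ B := by
    intro a ha
    refine Set.mem_union_right _ ?_
    show a + τ - τ ∈ A
    have e : a + τ - τ = a := by abel
    rw [e]; exact ha
  have hfinB : ∀ (c : E) (r : ℝ), (B ∩ Metric.closedBall c r).Finite := by
    intro c r
    rw [hBdef, Set.union_inter_distrib_right]
    refine Set.Finite.union (finA hdisc c r) ?_
    refine Set.Finite.subset (Set.Finite.image (fun y => y + τ) (finA hdisc (c - τ) r)) ?_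
    rintro x ⟨hx1, hx2⟩
    refine ⟨x - τ, ⟨hx1, ?_⟩, by show x - τ + τ = x; abel⟩
    simp only [Metric.mem_closedBall, dist_eq_norm] at hx2 ⊢
    have e : x - τ - (c - τ) = x - c := by abel
    rw [e]; exact hx2
  have hcountB : ∀ c : E, (B ∩ Metric.closedBall c ε).ncard ≤ n := by
    intro c
    rw [hBdef, Set.union_inter_distrib_right]
    have h2 : ({x : E | x - τ ∈ A} ∩ Metric.closedBall c ε).ncard ≤ N := by
      have hsub : {x : E | x - τ ∈ A} ∩ Metric.closedBall c ε ⊆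
          (fun y => y + τ) '' (A ∩ Metric.closedBall (c - τ) ε) := by
        rintro x ⟨hx1, hx2⟩
        refine ⟨x - τ, ⟨hx1, ?_⟩, by show x - τ + τ = x; abel⟩
        simp only [Metric.mem_closedBall, dist_eq_norm] at hx2 ⊢
        have e : x - τ - (c - τ) = x - c := by abel
        rw [e]; exact hx2
      calc ({x : E | x - τ ∈ A} ∩ Metric.closedBall c ε).ncard
          ≤ ((fun y => y + τ) '' (A ∩ Metric.closedBall (c - τ) ε)).ncard :=
            Set.ncard_le_ncard hsub ((finA hdisc _ _).image _)
        _ ≤ (A ∩ Metric.closedBall (c - τ) ε).ncard :=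
            Set.ncard_image_le (finA hdisc _ _)
        _ ≤ N := hN _
    calc ((A ∩ Metric.closedBall c ε) ∪ ({x : E | x - τ ∈ A} ∩ Metric.closedBall c ε)).ncard
        ≤ (A ∩ Metric.closedBall c ε).ncard +
            ({x : E | x - τ ∈ A} ∩ Metric.closedBall c ε).ncard :=
          Set.ncard_union_le _ _
      _ ≤ N + N := by
          have := hN c
          omega
      _ ≤ n := by omega

  -- per-component bijections
  have key : ∀ b ∈ B, ∃ g : E → E,
      Set.BijOn g {a : E | a ∈ A ∧ a + τ ∈ comp B s b} (A ∩ comp B s b) := by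
    intro b hb
    set K : Set E := comp B s b with hKdef
    have hKB : K ⊆ B := comp_subset hb
    have hKrad : K ⊆ Metric.closedBall b ((n:ℝ)*s) :=
      comp_radius (le_of_lt hs) hsn hfinB hcountB hb
    have hKfin : K.Finite := comp_finite (le_of_lt hs) hsn hfinB hcountB hb
    have hbK : b ∈ K := self_mem_comp b
    have hvex : ∀ x ∈ K, ∃ v ∈ G, ‖(x - b) - v‖ ≤ m := by
      intro x hx
      have h1 : ‖x - b‖ ≤ ε := by
        have h2 := Metric.mem_closedBall.mp (hKrad hx)
        rw [dist_eq_norm] at h2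
        linarith
      obtain ⟨v, hv, herr2⟩ := hGround (x - b) h1
      exact ⟨v, hv, by rw [herr] at herr2; exact herr2⟩
    set vv : E → E := fun x => if h : ∃ v ∈ G, ‖(x - b) - v‖ ≤ m then h.choose else 0 with hvvdef
    have hvvG : ∀ x ∈ K, vv x ∈ G ∧ ‖(x - b) - vv x‖ ≤ m := by
      intro x hx
      have hex := hvex x hx
      rw [hvvdef]
      simp only [dif_pos hex]
      exact ⟨hex.choose_spec.1, hex.choose_spec.2⟩
    set t : Finset E := hKfin.toFinset.image vv with htdef
    have htG : ↑t ⊆ G := by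
      intro w hw
      obtain ⟨x, hx, rfl⟩ := Finset.mem_image.mp hw
      exact (hvvG x ((Set.Finite.mem_toFinset hKfin).mp hx)).1
    have htGF : t ∈ GF.powerset := by
      refine Finset.mem_powerset.mpr (fun w hw => ?_)
      exact (Set.Finite.mem_toFinset hGfin).mpr (htG hw)
    have htne : t.Nonempty :=
      ⟨vv b, Finset.mem_image_of_mem vv ((Set.Finite.mem_toFinset hKfin).mpr hbK)⟩
    obtain ⟨hScomp, hSne, hSsub⟩ := hStfacts t htG htne
    have hFi : F ⟨t, htGF⟩ = fun x => ∑ᶠ a ∈ A, plateau (St t) m (x + a) := by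
      rw [hFdef]
      exact if_pos htne
    have hin : ∀ x ∈ K, (x - b) ∈ St t := by
      intro x hx
      have h1 := (hvvG x hx).2
      have hmem : vv x ∈ (↑t : Set E) := Finset.mem_coe.mpr
        (Finset.mem_image_of_mem vv ((Set.Finite.mem_toFinset hKfin).mpr hx))
      refine Set.mem_biUnion hmem ?_
      rw [Metric.mem_closedBall, dist_eq_norm]
      have hms : m ≤ s/4 := by rw [hmdef]; linarith
      linarith
    have hout : ∀ z : E, plateau (St t) m (z - b) ≠ 0 → z ∈ B → z ∈ K := by
      intro z hz hzB
      obtain ⟨y, hy, hyd⟩ := plateau_near_of_ne_zero hScomp hSne hm hz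
      rw [hStdef] at hy
      simp only [Set.mem_iUnion] at hy
      obtain ⟨v, hvt, hyv⟩ := hy
      obtain ⟨x₀, hx₀mem, hvvx₀⟩ := Finset.mem_image.mp (Finset.mem_coe.mp hvt)
      have hx₀K : x₀ ∈ K := (Set.Finite.mem_toFinset hKfin).mp hx₀mem
      have d2 : dist y (vv x₀) ≤ s/4 := by
        rw [hvvx₀]
        exact Metric.mem_closedBall.mp hyv
      have d3 : ‖(x₀ - b) - vv x₀‖ ≤ m := (hvvG x₀ hx₀K).2
      have hdist : dist x₀ z ≤ s := by
        have e1 : dist x₀ z = ‖(z - b) - (x₀ - b)‖ := by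
          rw [dist_comm, dist_eq_norm]
          congr 1
          abel
        rw [e1]
        have e2 : (z - b) - (x₀ - b) = ((z - b) - y) + (y - vv x₀) + (vv x₀ - (x₀ - b)) := by
          abel
        rw [e2]
        have hms : m ≤ s/4 := by rw [hmdef]; linarith
        calc ‖((z - b) - y) + (y - vv x₀) + (vv x₀ - (x₀ - b))‖
            ≤ ‖((z - b) - y) + (y - vv x₀)‖ + ‖vv x₀ - (x₀ - b)‖ := norm_add_le _ _
          _ ≤ ‖(z - b) - y‖ + ‖y - vv x₀‖ + ‖vv x₀ - (x₀ - b)‖ := by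
              linarith [norm_add_le ((z - b) - y) (y - vv x₀)]
          _ ≤ s := by
              have e3 : ‖(z - b) - y‖ = dist (z - b) y := (dist_eq_norm _ _).symm
              have e4 : ‖y - vv x₀‖ = dist y (vv x₀) := (dist_eq_norm _ _).symm
              have e5 : ‖vv x₀ - (x₀ - b)‖ = ‖(x₀ - b) - vv x₀‖ := norm_sub_rev _ _
              rw [e3, e4, e5]
              linarith
      exact mem_comp_of_step hx₀K hzB hdist
    set U : Set E := {a : E | a ∈ A ∧ a + τ ∈ K} with hUdef
    have hUfin : U.Finite := by
      refine Set.Finite.subset (hKfin.image (fun z => z - τ)) ?_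
      rintro a ⟨haA, haK⟩
      exact ⟨a + τ, haK, by show a + τ - τ = a; abel⟩
    have hVfin : (A ∩ K).Finite := hKfin.subset Set.inter_subset_right
    have claimA : F ⟨t, htGF⟩ (-b) = ((A ∩ K).ncard : ℝ) := by
      have hFi' : F ⟨t, htGF⟩ (-b) = ∑ᶠ a ∈ A, plateau (St t) m (-b + a) := by rw [hFi]
      rw [hFi']
      have h1 : (∑ᶠ a ∈ A, plateau (St t) m (-b + a)) =
          ∑ a ∈ hVfin.toFinset, plateau (St t) m (-b + a) := by
        refine lem_sum_eq _ (-b) _ (fun a ha => ((Set.Finite.mem_toFinset hVfin).mp ha).1) ?_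
        intro a haA hane
        have e : -b + a = a - b := by abel
        rw [e] at hane
        exact (Set.Finite.mem_toFinset hVfin).mpr ⟨haA, hout a hane (hAB haA)⟩
      rw [h1]
      have h2 : ∀ a ∈ hVfin.toFinset, plateau (St t) m (-b + a) = 1 := by
        intro a ha
        have hK1 := ((Set.Finite.mem_toFinset hVfin).mp ha).2
        have e : -b + a = a - b := by abel
        rw [e]
        exact plateau_eq_one_of_mem hm (hin a hK1)
      rw [Finset.sum_congr rfl h2, Finset.sum_const, Set.ncard_eq_toFinset_card _ hVfin]
      simp
    have claimB : F ⟨t, htGF⟩ (-b + τ) = (U.ncard : ℝ) := by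
      have hFi' : F ⟨t, htGF⟩ (-b + τ) = ∑ᶠ a ∈ A, plateau (St t) m ((-b + τ) + a) := by
        rw [hFi]
      rw [hFi']
      have h1 : (∑ᶠ a ∈ A, plateau (St t) m ((-b + τ) + a)) =
          ∑ a ∈ hUfin.toFinset, plateau (St t) m ((-b + τ) + a) := by
        refine lem_sum_eq _ (-b + τ) _ (fun a ha => ((Set.Finite.mem_toFinset hUfin).mp ha).1) ?_
        intro a haA hane
        have e : (-b + τ) + a = (a + τ) - b := by abel
        rw [e] at hane
        exact (Set.Finite.mem_toFinset hUfin).mpr ⟨haA, hout (a + τ) hane (hAτB a haA)⟩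
      rw [h1]
      have h2 : ∀ a ∈ hUfin.toFinset, plateau (St t) m ((-b + τ) + a) = 1 := by
        intro a ha
        have hK1 := ((Set.Finite.mem_toFinset hUfin).mp ha).2
        have e : (-b + τ) + a = (a + τ) - b := by abel
        rw [e]
        exact plateau_eq_one_of_mem hm (hin (a + τ) hK1)
      rw [Finset.sum_congr rfl h2, Finset.sum_const, Set.ncard_eq_toFinset_card _ hUfin]
      simp
    have h14 := hτ' ⟨t, htGF⟩ (-b)
    rw [claimA, claimB] at h14
    have hcards : U.ncard = (A ∩ K).ncard :=
      nat_eq_of_abs_sub_lt_one (lt_of_le_of_lt h14 (by norm_num))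
    exact exists_bijOn_of_ncard_eq hUfin hVfin hcards
  -- glue the bijections
  set Γ : Set E → E → E := fun K' =>
    if h : ∃ g : E → E, Set.BijOn g {a : E | a ∈ A ∧ a + τ ∈ K'} (A ∩ K') then h.choose
    else id with hΓdef
  have hΓ : ∀ b ∈ B, Set.BijOn (Γ (comp B s b))
      {a : E | a ∈ A ∧ a + τ ∈ comp B s b} (A ∩ comp B s b) := by
    intro b hb
    have hexg := key b hb
    rw [hΓdef]
    simp only [dif_pos hexg]
    exact hexg.choose_spec
  set σf : E → E := fun a => Γ (comp B s (a + τ)) a with hσfdef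
  have hmapsto : ∀ a ∈ A, σf a ∈ A ∩ comp B s (a + τ) := by
    intro a ha
    exact (hΓ (a + τ) (hAτB a ha)).mapsTo ⟨ha, self_mem_comp _⟩
  have hinj : Set.InjOn σf A := by
    intro a₁ h₁ a₂ h₂ he
    have m₁ := hmapsto a₁ h₁
    have m₂ := hmapsto a₂ h₂
    have hKeq : comp B s (a₂ + τ) = comp B s (a₁ + τ) := by
      have w₁ : σf a₁ ∈ comp B s (a₁ + τ) := m₁.2
      have w₂ : σf a₁ ∈ comp B s (a₂ + τ) := by rw [he]; exact m₂.2
      calc comp B s (a₂ + τ) = comp B s (σf a₁) := (comp_eq_of_mem (hAτB a₂ h₂) w₂).symm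
        _ = comp B s (a₁ + τ) := comp_eq_of_mem (hAτB a₁ h₁) w₁
    refine (hΓ (a₁ + τ) (hAτB a₁ h₁)).injOn ⟨h₁, self_mem_comp _⟩ ?_ ?_
    · show a₂ ∈ {a : E | a ∈ A ∧ a + τ ∈ comp B s (a₁ + τ)}
      refine ⟨h₂, ?_⟩
      rw [← hKeq]
      exact self_mem_comp _
    · show Γ (comp B s (a₁ + τ)) a₁ = Γ (comp B s (a₁ + τ)) a₂
      have e2 : σf a₂ = Γ (comp B s (a₁ + τ)) a₂ := by
        rw [hσfdef]
        simp only []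
        rw [hKeq]
      rw [← e2]
      exact he
  have hsurj : Set.SurjOn σf A A := by
    intro w hw
    obtain ⟨a, ha, hga⟩ := (hΓ w (hAB hw)).surjOn ⟨hw, self_mem_comp w⟩
    refine ⟨a, ha.1, ?_⟩
    have hKeq : comp B s (a + τ) = comp B s w := comp_eq_of_mem (hAB hw) ha.2
    show Γ (comp B s (a + τ)) a = w
    rw [hKeq]
    exact hga
  have hbij : Set.BijOn σf A A := ⟨fun a ha => (hmapsto a ha).1, hinj, hsurj⟩
  refine ⟨Set.BijOn.equiv σf hbij, ?_⟩
  intro a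
  have hcoe : ((Set.BijOn.equiv σf hbij) a : E) = σf (a : E) := rfl
  rw [hcoe]
  have h1 : σf (a : E) ∈ comp B s ((a : E) + τ) := (hmapsto (a : E) a.2).2
  have h2 := comp_radius (le_of_lt hs) hsn hfinB hcountB (hAτB (a : E) a.2) h1
  have h3 := Metric.mem_closedBall.mp h2
  have e : ‖(a : E) + τ - σf (a : E)‖ = dist (σf (a : E)) ((a : E) + τ) := by
    rw [dist_eq_norm, norm_sub_rev]
  rw [e]
  have hn32 : (n:ℝ) * s < ε := by linarith
  linarith

end MpMain

/-- A discrete set `A` has Bohr almost periodic convolutions with all continuous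
compactly supported functions iff for every `ε > 0` its set of `ε`-almost periods
is relatively dense. -/
theorem discrete_weakAP_iff_almostPeriods_relativelyDense {p : ℕ}
    (A : Set (EuclideanSpace ℝ (Fin p))) (hdisc : DiscreteSet A) :
    (∀ φ : EuclideanSpace ℝ (Fin p) → ℝ, Continuous φ → HasCompactSupport φ →
      BohrAlmostPeriodic (fun x => ∑ᶠ a ∈ A, φ (x + a)))
    ↔ (∀ ε : ℝ, 0 < ε → RelativelyDense {τ | IsAlmostPeriodOf A ε τ}) := by
  constructor
  · intro hyp ε hε
    exact mp_main hdisc hyp hε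
  · intro hA φ hφc hφs
    exact mpr_main hdisc hA φ hφc hφs
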